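/- Moran's theorem: let λ₁,…,λ_p ∈ (0,1) and let Δ_{i₁⋯i_n} ⊆ ℝ be a family of pairwise disjoint closed intervals, indexed by finite words over {1,…,p}, such that Δ_{i₁⋯i_n i_{n+1}} ⊆ Δ_{i₁⋯i_n} and the length of Δ_{i₁⋯i_n} equals ∏_{k=1}^n λ_{i_k}. Then the limit set F = ⋂_{n≥1} ⋃_{i₁⋯i_n} Δ_{i₁⋯i_n} has Hausdorff dimension equal to the unique s with ∑_{k=1}^p λ_k^s = 1. -/

import Mathlib

open Set MeasureTheory

namespace MoranAux

variable {p : ℕ}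

/-- Partial sums of the weight vector, extended to `ℕ`. -/
noncomputable def B (g : Fin p → ℝ) (m : ℕ) : ℝ :=
  ∑ j ∈ Finset.range m, if h : j < p then g ⟨j, h⟩ else 0

lemma B_zero (g : Fin p → ℝ) : B g 0 = 0 := by simp [B]

lemma B_succ (g : Fin p → ℝ) {m : ℕ} (h : m < p) : B g (m + 1) = B g m + g ⟨m, h⟩ := by
  simp [B, Finset.sum_range_succ, dif_pos h]

lemma B_mono (g : Fin p → ℝ) (hg : ∀ k, 0 ≤ g k) : Monotone (B g) := by
  intro m m' hm
  exact Finset.sum_le_sum_of_subset_of_nonneg (Finset.range_subset_range.2 hm)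
    (fun j _ _ => by split <;> simp [hg _])

lemma B_p (g : Fin p → ℝ) : B g p = ∑ k, g k := by
  rw [B, ← Fin.sum_univ_eq_sum_range (fun j : ℕ => if h : j < p then g ⟨j, h⟩ else 0) p]
  exact Finset.sum_congr rfl fun j _ => by rw [dif_pos j.isLt]

/-- weight of a word -/
def q (g : Fin p → ℝ) (w : List (Fin p)) : ℝ := (w.map g).prod

lemma q_nil (g : Fin p → ℝ) : q g [] = 1 := rfl

lemma q_append (g : Fin p → ℝ) (w v : List (Fin p)) : q g (w ++ v) = q g w * q g v := by
  simp [q]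

lemma q_pos (g : Fin p → ℝ) (hg : ∀ k, 0 < g k) (w : List (Fin p)) : 0 < q g w := by
  apply List.prod_pos
  intro x hx
  rcases List.mem_map.mp hx with ⟨k, -, rfl⟩
  exact hg k

lemma q_le_one (g : Fin p → ℝ) (hg : ∀ k, 0 ≤ g k ∧ g k ≤ 1) (w : List (Fin p)) : q g w ≤ 1 := by
  induction w with
  | nil => simp [q]
  | cons a l ih =>
      have h1 : 0 ≤ q g l := List.prod_nonneg (by
        intro x hx; rcases List.mem_map.mp hx with ⟨k, -, rfl⟩; exact (hg k).1)
      calc q g (a :: l) = g a * q g l := by simp [q]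
        _ ≤ 1 * 1 := mul_le_mul (hg a).2 ih h1 zero_le_one
        _ = 1 := by ring

lemma q_nonneg (g : Fin p → ℝ) (hg : ∀ k, 0 ≤ g k) (w : List (Fin p)) : 0 ≤ q g w :=
  List.prod_nonneg (by intro x hx; rcases List.mem_map.mp hx with ⟨k, -, rfl⟩; exact hg k)

/-- rpow of a product -/
lemma q_rpow (lam : Fin p → ℝ) (hlam : ∀ k, 0 ≤ lam k) (s : ℝ) (w : List (Fin p)) :
    q (fun k => lam k ^ s) w = q lam w ^ s := by
  induction w with
  | nil => simp [q, Real.one_rpow]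
  | cons a l ih =>
      have h1 : 0 ≤ q lam l := q_nonneg lam hlam l
      simp only [q, List.map_cons, List.prod_cons] at *
      rw [ih, ← Real.mul_rpow (hlam a) h1]

/-- One step of the address expansion. -/
noncomputable def step (hp : 0 < p) (g : Fin p → ℝ) (t : ℝ)
    (wx : List (Fin p) × ℝ) : List (Fin p) × ℝ :=
  if h : ∃ k : Fin p, t ∈ Set.Ico (wx.2 + q g wx.1 * B g (k : ℕ))
      (wx.2 + q g wx.1 * B g ((k : ℕ) + 1)) then
    (wx.1 ++ [h.choose], wx.2 + q g wx.1 * B g ((h.choose : ℕ)))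
  else (wx.1 ++ [⟨0, hp⟩], wx.2)

noncomputable def chain (hp : 0 < p) (g : Fin p → ℝ) (t : ℝ) : ℕ → List (Fin p) × ℝ
  | 0 => ([], 0)
  | n + 1 => step hp g t (chain hp g t n)

lemma chain_succ_fst (hp : 0 < p) (g : Fin p → ℝ) (t : ℝ) (n : ℕ) :
    ∃ k : Fin p, (chain hp g t (n + 1)).1 = (chain hp g t n).1 ++ [k] := by
  rw [chain, step]
  split
  · exact ⟨_, rfl⟩
  · exact ⟨_, rfl⟩

lemma chain_length (hp : 0 < p) (g : Fin p → ℝ) (t : ℝ) (n : ℕ) :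
    (chain hp g t n).1.length = n := by
  induction n with
  | zero => rfl
  | succ n ih =>
      rcases chain_succ_fst hp g t n with ⟨k, hk⟩
      simp [hk, ih]

end MoranAux

namespace MoranAux
variable {p : ℕ}

/-- membership form of tiling of an Ico by consecutive Ico's -/
lemma exists_mem_Ico_consec (f : ℕ → ℝ) {m : ℕ} {t : ℝ}
    (ht : t ∈ Ico (f 0) (f m)) : ∃ k < m, t ∈ Ico (f k) (f (k + 1)) := by
  induction m with
  | zero => exact absurd (lt_of_le_of_lt ht.1 ht.2) (lt_irrefl _)
  | succ m ih =>
      by_cases h : f m ≤ t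
      · exact ⟨m, Nat.lt_succ_self m, h, ht.2⟩
      · push_neg at h
        rcases ih ⟨ht.1, h⟩ with ⟨k, hk, hk2⟩
        exact ⟨k, hk.trans (Nat.lt_succ_self m), hk2⟩

lemma step_snd (hp : 0 < p) (g : Fin p → ℝ) (t : ℝ) (wx : List (Fin p) × ℝ) (k : Fin p)
    (h : (step hp g t wx).1 = wx.1 ++ [k]) :
    (step hp g t wx).2 = wx.2 + q g wx.1 * B g (k : ℕ) := by
  by_cases hex : ∃ k : Fin p, t ∈ Set.Ico (wx.2 + q g wx.1 * B g (k : ℕ))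
      (wx.2 + q g wx.1 * B g ((k : ℕ) + 1))
  · rw [step, dif_pos hex] at h ⊢
    have : hex.choose = k := by simpa using h
    rw [this]
  · rw [step, dif_neg hex] at h ⊢
    have : (⟨0, hp⟩ : Fin p) = k := by simpa using h
    rw [← this]
    simp [B_zero]

lemma chain_snd_eq (hp : 0 < p) (g : Fin p → ℝ) (t t' : ℝ) (n : ℕ)
    (h : (chain hp g t n).1 = (chain hp g t' n).1) :
    (chain hp g t n).2 = (chain hp g t' n).2 := by
  induction n with
  | zero => rfl
  | succ n ih =>
      rcases chain_succ_fst hp g t n with ⟨k, hk⟩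
      rcases chain_succ_fst hp g t' n with ⟨k', hk'⟩
      rw [hk, hk'] at h
      have hlen : (chain hp g t n).1.length = (chain hp g t' n).1.length := by
        rw [chain_length, chain_length]
      obtain ⟨h1, h2⟩ := List.append_inj h hlen
      have hkk : k = k' := by simpa using h2
      have hx := ih h1
      have e1 := step_snd hp g t (chain hp g t n) k hk
      have e2 := step_snd hp g t' (chain hp g t' n) k' hk'
      show (step hp g t (chain hp g t n)).2 = (step hp g t' (chain hp g t' n)).2
      rw [e1, e2, h1, hx, hkk]

lemma chain_mem (hp : 0 < p) (g : Fin p → ℝ) (hg : ∀ k, 0 < g k) (hsum : ∑ k, g k = 1)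
    {t : ℝ} (ht : t ∈ Ico (0:ℝ) 1) (n : ℕ) :
    t ∈ Ico ((chain hp g t n).2) ((chain hp g t n).2 + q g (chain hp g t n).1) := by
  induction n with
  | zero => simpa [chain, q_nil] using ht
  | succ n ih =>
      have hq0 : (0:ℝ) < q g (chain hp g t n).1 := q_pos g hg _
      have hmono : Monotone (fun m => (chain hp g t n).2 + q g (chain hp g t n).1 * B g m) := by
        intro m m' hm
        have := B_mono g (fun k => (hg k).le) hm
        dsimp only
        nlinarith
      have h0 : (chain hp g t n).2 + q g (chain hp g t n).1 * B g 0 = (chain hp g t n).2 := by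
        simp [B_zero]
      have hP : (chain hp g t n).2 + q g (chain hp g t n).1 * B g p
          = (chain hp g t n).2 + q g (chain hp g t n).1 := by
        rw [B_p, hsum, mul_one]
      obtain ⟨k, hk, hmem⟩ := exists_mem_Ico_consec
        (fun m => (chain hp g t n).2 + q g (chain hp g t n).1 * B g m)
        (m := p) (by rw [h0, hP]; exact ih)
      have hex : ∃ j : Fin p, t ∈ Set.Ico ((chain hp g t n).2 + q g (chain hp g t n).1 * B g (j : ℕ))
          ((chain hp g t n).2 + q g (chain hp g t n).1 * B g ((j : ℕ) + 1)) := ⟨⟨k, hk⟩, hmem⟩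
      show t ∈ Ico ((step hp g t (chain hp g t n)).2)
        ((step hp g t (chain hp g t n)).2 + q g (step hp g t (chain hp g t n)).1)
      rw [step, dif_pos hex]
      obtain hc := hex.choose_spec
      have hqapp : q g ((chain hp g t n).1 ++ [hex.choose])
          = q g (chain hp g t n).1 * g hex.choose := by
        simp [q_append, q]
      have hBsucc : B g ((hex.choose : ℕ) + 1) = B g (hex.choose : ℕ) + g hex.choose := by
        rw [B_succ g hex.choose.isLt]
      constructor
      · exact hc.1
      · have := hc.2
        rw [hBsucc] at this
        simp only [hqapp]
        nlinarith

lemma Ico_step_disjoint (g : Fin p → ℝ) (hg : ∀ k, 0 ≤ g k) {x L : ℝ} (hL : 0 ≤ L)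
    {j j' : ℕ} (hjj : j ≠ j') {t : ℝ}
    (h1 : t ∈ Ico (x + L * B g j) (x + L * B g (j + 1)))
    (h2 : t ∈ Ico (x + L * B g j') (x + L * B g (j' + 1))) : False := by
  rcases hjj.lt_or_gt with h | h
  · have hB : B g (j + 1) ≤ B g j' := B_mono g hg h
    have := h1.2; have := h2.1
    nlinarith
  · have hB : B g (j' + 1) ≤ B g j := B_mono g hg h
    have := h2.2; have := h1.1
    nlinarith

end MoranAux

namespace MoranAux
variable {p : ℕ}

lemma chain_fst_ne_nil (hp : 0 < p) (g : Fin p → ℝ) (t : ℝ) (n : ℕ) :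
    (chain hp g t (n + 1)).1 ≠ [] := by
  rcases chain_succ_fst hp g t n with ⟨k, hk⟩
  simp [hk]

lemma measurableSet_fiber (hp : 0 < p) (g : Fin p → ℝ) (hg : ∀ k, 0 < g k) (n : ℕ)
    (w : List (Fin p)) : MeasurableSet {t : ℝ | (chain hp g t n).1 = w} := by
  induction n generalizing w with
  | zero =>
      by_cases hw : w = []
      · subst hw
        convert MeasurableSet.univ using 1
        ext t; simp [chain]
      · convert MeasurableSet.empty using 1
        ext t; simp [chain, Ne.symm hw]
  | succ n ih =>
      by_cases hw : w = []
      · subst hw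
        convert MeasurableSet.empty using 1
        ext t; simpa using chain_fst_ne_nil hp g t n
      set u := w.dropLast with hu
      set k := w.getLast hw with hk
      have hw' : u ++ [k] = w := List.dropLast_append_getLast hw
      set A := {t : ℝ | (chain hp g t n).1 = u} with hA
      have hAm : MeasurableSet A := ih u
      -- membership in target implies membership in A
      have hsub : ∀ t : ℝ, (chain hp g t (n + 1)).1 = w → t ∈ A := by
        intro t ht
        rcases chain_succ_fst hp g t n with ⟨k₀, hk₀⟩
        rw [hk₀, ← hw'] at ht
        have hlen : (chain hp g t n).1.length = u.length := by
          have := congrArg List.length ht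
          simpa using this
        exact (List.append_inj ht hlen).1
      rcases eq_empty_or_nonempty A with hAe | ⟨t₀, ht₀⟩
      · convert MeasurableSet.empty using 1
        rw [eq_empty_iff_forall_notMem]
        intro t ht
        have := hsub t ht
        rw [hAe] at this
        exact this
      · set x₀ := (chain hp g t₀ n).2 with hx₀
        set G : Fin p → Set ℝ := fun j =>
          Ico (x₀ + q g u * B g (j : ℕ)) (x₀ + q g u * B g ((j : ℕ) + 1)) with hG
        have hq0 : 0 < q g u := q_pos g hg u
        -- uniqueness
        have Guniq : ∀ (t : ℝ) (j j' : Fin p), t ∈ G j → t ∈ G j' → j = j' := by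
          intro t j j' h1 h2
          by_contra hne
          exact Ico_step_disjoint g (fun k => (hg k).le) hq0.le
            (fun hc => hne (Fin.ext hc)) h1 h2
        have key : {t : ℝ | (chain hp g t (n + 1)).1 = w}
            = A ∩ (G k ∪ (if k = (⟨0, hp⟩ : Fin p) then (⋃ j, G j)ᶜ else ∅)) := by
          ext t
          simp only [mem_setOf_eq, mem_inter_iff, mem_union]
          constructor
          · intro ht
            have htA : t ∈ A := hsub t ht
            refine ⟨htA, ?_⟩
            have hcs : (chain hp g t n).1 = u := htA
            have hcx : (chain hp g t n).2 = x₀ := by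
              rw [hx₀]
              exact chain_snd_eq hp g t t₀ n (by rw [hcs, ht₀])
            have hdef : (chain hp g t (n+1)).1 = (step hp g t (chain hp g t n)).1 := rfl
            by_cases hex : ∃ j : Fin p, t ∈ Set.Ico ((chain hp g t n).2
                + q g (chain hp g t n).1 * B g (j : ℕ))
                ((chain hp g t n).2 + q g (chain hp g t n).1 * B g ((j : ℕ) + 1))
            · rw [hdef, step, dif_pos hex] at ht
              obtain ⟨c, hcdef⟩ : ∃ c : Fin p, hex.choose = c := ⟨_, rfl⟩
              have hspec : t ∈ Set.Ico ((chain hp g t n).2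
                  + q g (chain hp g t n).1 * B g (c : ℕ))
                  ((chain hp g t n).2 + q g (chain hp g t n).1 * B g ((c : ℕ) + 1)) := by
                rw [← hcdef]; exact hex.choose_spec
              rw [hcdef] at ht
              have hck : c = k := by
                rw [← hw'] at ht
                have hlen : (chain hp g t n).1.length = u.length := by
                  rw [hcs]
                have := (List.append_inj ht hlen).2
                simpa using this
              rw [hcs, hcx, hck] at hspec
              exact Or.inl hspec
            · rw [hdef, step, dif_neg hex] at ht
              have hk0 : k = (⟨0, hp⟩ : Fin p) := by
                rw [← hw'] at ht
                have hlen : (chain hp g t n).1.length = u.length := by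
                  rw [hcs]
                have := (List.append_inj ht hlen).2
                simpa using this.symm
              right
              rw [if_pos hk0]
              intro hmem
              simp only [mem_iUnion] at hmem
              rcases hmem with ⟨j, hj⟩
              apply hex
              refine ⟨j, ?_⟩
              rw [hcs, hcx]
              exact hj
          · rintro ⟨htA, hD⟩
            have hcs : (chain hp g t n).1 = u := htA
            have hcx : (chain hp g t n).2 = x₀ := by
              rw [hx₀]
              exact chain_snd_eq hp g t t₀ n (by rw [hcs, ht₀])
            have hdef : (chain hp g t (n+1)).1 = (step hp g t (chain hp g t n)).1 := rfl
            by_cases hex : ∃ j : Fin p, t ∈ Set.Ico ((chain hp g t n).2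
                + q g (chain hp g t n).1 * B g (j : ℕ))
                ((chain hp g t n).2 + q g (chain hp g t n).1 * B g ((j : ℕ) + 1))
            · obtain ⟨c, hcdef⟩ : ∃ c : Fin p, hex.choose = c := ⟨_, rfl⟩
              have hspec : t ∈ Set.Ico ((chain hp g t n).2
                  + q g (chain hp g t n).1 * B g (c : ℕ))
                  ((chain hp g t n).2 + q g (chain hp g t n).1 * B g ((c : ℕ) + 1)) := by
                rw [← hcdef]; exact hex.choose_spec
              have hGc : t ∈ G c := by
                rw [hcs, hcx] at hspec
                exact hspec
              rcases hD with hGk | hEls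
              · have hck : c = k := Guniq t _ _ hGc hGk
                rw [hdef, step, dif_pos hex, hcdef, hck, hcs, hw']
              · exfalso
                rcases Classical.em (k = (⟨0, hp⟩ : Fin p)) with h0 | h0
                · rw [if_pos h0] at hEls
                  exact hEls (mem_iUnion.mpr ⟨c, hGc⟩)
                · rw [if_neg h0] at hEls
                  exact hEls
            · have hnG : ∀ j : Fin p, t ∉ G j := by
                intro j hj
                apply hex
                refine ⟨j, ?_⟩
                rw [hcs, hcx]
                exact hj
              rcases hD with hGk | hEls
              · exact absurd hGk (hnG k)
              · rcases Classical.em (k = (⟨0, hp⟩ : Fin p)) with h0 | h0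
                · rw [hdef, step, dif_neg hex, hcs, ← h0, hw']
                · rw [if_neg h0] at hEls
                  exact absurd hEls (notMem_empty t)
        rw [key]
        refine hAm.inter (MeasurableSet.union measurableSet_Ico ?_)
        split
        · exact (MeasurableSet.iUnion fun j => measurableSet_Ico).compl
        · exact MeasurableSet.empty

end MoranAux

namespace MoranAux
variable {p : ℕ}

lemma q_le_pow (lam : Fin p → ℝ) {M : ℝ} (h : ∀ k, 0 ≤ lam k ∧ lam k ≤ M) (hM : 0 ≤ M)
    (w : List (Fin p)) : q lam w ≤ M ^ w.length := by
  induction w with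
  | nil => simp [q]
  | cons a l ih =>
      have h1 : 0 ≤ q lam l := q_nonneg lam (fun k => (h k).1) l
      calc q lam (a :: l) = lam a * q lam l := by simp [q]
        _ ≤ M * M ^ l.length := mul_le_mul (h a).2 ih h1 hM
        _ = M ^ (a :: l).length := by rw [List.length_cons, pow_succ']

lemma prefix_nest {Δ : List (Fin p) → Set ℝ}
    (hNest : ∀ (w : List (Fin p)) (i : Fin p), w ≠ [] → Δ (w ++ [i]) ⊆ Δ w)
    (u : List (Fin p)) (hu : u ≠ []) (v : List (Fin p)) : Δ (u ++ v) ⊆ Δ u := by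
  induction v using List.reverseRecOn with
  | nil => simp
  | append_singleton v i ih =>
      rw [← List.append_assoc]
      exact (hNest (u ++ v) i (by simp [hu])).trans ih

lemma chain_fst_ne_nil' (hp : 0 < p) (g : Fin p → ℝ) (t : ℝ) {n : ℕ} (hn : 1 ≤ n) :
    (chain hp g t n).1 ≠ [] := by
  intro h
  have := chain_length hp g t n
  rw [h] at this
  simp at this
  omega

lemma chain_nest (hp : 0 < p) (g : Fin p → ℝ) (t : ℝ) {Δ : List (Fin p) → Set ℝ}
    (hNest : ∀ (w : List (Fin p)) (i : Fin p), w ≠ [] → Δ (w ++ [i]) ⊆ Δ w)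
    {n m : ℕ} (hn : 1 ≤ n) (hm : n ≤ m) :
    Δ (chain hp g t m).1 ⊆ Δ (chain hp g t n).1 := by
  induction m, hm using Nat.le_induction with
  | base => exact subset_rfl
  | succ m hm ih =>
      rcases chain_succ_fst hp g t m with ⟨k, hk⟩
      rw [hk]
      exact (hNest _ k (chain_fst_ne_nil' hp g t (hn.trans hm))).trans ih

end MoranAux

open MoranAux ENNReal

/-- **Moran's theorem.** Let `λ₁, …, λ_p ∈ (0,1)` and let `Δ_w`, indexed by nonempty
finite words `w` over `{1,…,p}`, be closed intervals of length `∏_{k} λ_{w_k}`, pairwise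
disjoint within each generation and nested (`Δ_{w i} ⊆ Δ_w`).  Then the limit set
`F = ⋂_{n ≥ 1} ⋃_{|w| = n} Δ_w` has Hausdorff dimension the unique `s` with
`∑ λ_k ^ s = 1`. -/
theorem moran_theorem {p : ℕ} (hp : 0 < p) (lam : Fin p → ℝ)
    (hlam : ∀ k, lam k ∈ Set.Ioo (0 : ℝ) 1)
    (Δ : List (Fin p) → Set ℝ)
    (hInt : ∀ w : List (Fin p), w ≠ [] →
      ∃ a : ℝ, Δ w = Set.Icc a (a + (w.map lam).prod))
    (hDisj : ∀ w w' : List (Fin p), w ≠ [] → w.length = w'.length → w ≠ w' →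
      Disjoint (Δ w) (Δ w'))
    (hNest : ∀ (w : List (Fin p)) (i : Fin p), w ≠ [] → Δ (w ++ [i]) ⊆ Δ w)
    (F : Set ℝ)
    (hF : F = ⋂ (n : ℕ) (_ : 1 ≤ n),
      ⋃ (w : List (Fin p)) (_ : w.length = n), Δ w)
    (s : ℝ) (hs : 0 ≤ s) (hsum : ∑ k, lam k ^ s = 1) :
    dimH F = ENNReal.ofReal s := by
  classical
  have hpi : Nonempty (Fin p) := ⟨⟨0, hp⟩⟩
  -- basic constants
  set lm : ℝ := Finset.univ.inf' Finset.univ_nonempty lam with hlm_def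
  set lM : ℝ := Finset.univ.sup' Finset.univ_nonempty lam with hlM_def
  have hlm_le : ∀ k, lm ≤ lam k := fun k => Finset.inf'_le _ (Finset.mem_univ k)
  have hle_lM : ∀ k, lam k ≤ lM := fun k => Finset.le_sup' _ (Finset.mem_univ k)
  have hlm_pos : 0 < lm := by
    obtain ⟨k, -, hk⟩ := Finset.exists_mem_eq_inf' Finset.univ_nonempty lam
    rw [hlm_def, hk]; exact (hlam k).1
  have hlM_lt1 : lM < 1 := by
    obtain ⟨k, -, hk⟩ := Finset.exists_mem_eq_sup' Finset.univ_nonempty lam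
    rw [hlM_def, hk]; exact (hlam k).2
  have hlM_pos : 0 < lM := lt_of_lt_of_le hlm_pos ((hlm_le ⟨0, hp⟩).trans (hle_lM ⟨0, hp⟩))
  have hlm_lt1 : lm < 1 := lt_of_le_of_lt ((hlm_le ⟨0, hp⟩).trans (hle_lM ⟨0, hp⟩)) hlM_lt1
  -- weights
  set g : Fin p → ℝ := fun k => lam k ^ s with hg_def
  have hg_pos : ∀ k, 0 < g k := fun k => Real.rpow_pos_of_pos (hlam k).1 s
  have hg_sum : ∑ k, g k = 1 := hsum
  have hlam_pos : ∀ k, 0 < lam k := fun k => (hlam k).1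
  have hq_pos : ∀ w, 0 < q lam w := q_pos lam hlam_pos
  have hq_nonneg : ∀ w, 0 ≤ q lam w := fun w => (hq_pos w).le
  have hq_le_one : ∀ w, q lam w ≤ 1 :=
    q_le_one lam (fun k => ⟨(hlam k).1.le, (hlam k).2.le⟩)
  have hqg : ∀ w, q g w = q lam w ^ s := q_rpow lam (fun k => (hlam k).1.le) s
  -- interval data
  choose aa haa using hInt
  set A : List (Fin p) → ℝ := fun w => if h : w = [] then 0 else aa w h with hA_def
  have hΔ : ∀ w (h : w ≠ []), Δ w = Set.Icc (A w) (A w + q lam w) := by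
    intro w h
    simp only [hA_def, dif_neg h]
    exact haa w h
  -- finite-union form of the generations
  have hgen : ∀ n : ℕ, (⋃ (w : List (Fin p)) (_ : w.length = n), Δ w)
      = ⋃ f : Fin n → Fin p, Δ (List.ofFn f) := by
    intro n
    apply Set.Subset.antisymm
    · rintro x hx
      rw [Set.mem_iUnion₂] at hx
      obtain ⟨w, hlen, hx⟩ := hx
      subst hlen
      exact Set.mem_iUnion.mpr ⟨w.get, by rw [List.ofFn_get]; exact hx⟩
    · rintro x hx
      rw [Set.mem_iUnion] at hx
      obtain ⟨f, hx⟩ := hx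
      exact Set.mem_iUnion₂.mpr ⟨List.ofFn f, by simp, hx⟩
  -- upper bound
  have hupper : dimH F ≤ ENNReal.ofReal s := by
    have hmeas : μH[s] F ≤ 1 := by
      have hbound := MeasureTheory.Measure.hausdorffMeasure_le_liminf_sum s F
        (l := Filter.atTop) (ι := fun n => Fin n → Fin p)
        (fun n => ENNReal.ofReal (lM ^ n))
        (by
          have : Filter.Tendsto (fun n : ℕ => lM ^ n) Filter.atTop (nhds 0) :=
            tendsto_pow_atTop_nhds_zero_of_lt_one hlM_pos.le hlM_lt1
          have := (ENNReal.continuous_ofReal.tendsto 0).comp this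
          simpa [Function.comp_def] using this)
        (fun n f => Δ (List.ofFn f))
        (by
          filter_upwards [Filter.eventually_ge_atTop 1] with n hn f
          have hne : List.ofFn f ≠ [] := by
            intro h
            have := congrArg List.length h
            simp at this
            omega
          rw [hΔ _ hne, Real.ediam_Icc]
          have : q lam (List.ofFn f) ≤ lM ^ n := by
            have := q_le_pow lam (fun k => ⟨(hlam k).1.le, hle_lM k⟩) hlM_pos.le (List.ofFn f)
            simpa using this
          exact ENNReal.ofReal_le_ofReal (by linarith)
        )
        (by
          filter_upwards [Filter.eventually_ge_atTop 1] with n hn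
          intro x hx
          rw [hF] at hx
          have hx' := Set.mem_iInter.mp (Set.mem_iInter.mp hx n) hn
          rw [hgen n] at hx'
          exact hx')
      refine hbound.trans ?_
      have hconst : ∀ᶠ n : ℕ in Filter.atTop,
          (∑ f : Fin n → Fin p, Metric.ediam (Δ (List.ofFn f)) ^ s) = 1 := by
        filter_upwards [Filter.eventually_ge_atTop 1] with n hn
        have hterm : ∀ f : Fin n → Fin p,
            Metric.ediam (Δ (List.ofFn f)) ^ s = ENNReal.ofReal (∏ i, g (f i)) := by
          intro f
          have hne : List.ofFn f ≠ [] := by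
            intro h
            have := congrArg List.length h
            simp at this
            omega
          rw [hΔ _ hne, Real.ediam_Icc]
          have h1 : (A (List.ofFn f) + q lam (List.ofFn f)) - A (List.ofFn f)
              = q lam (List.ofFn f) := by ring
          rw [h1, ENNReal.ofReal_rpow_of_pos (hq_pos _), ← hqg]
          congr 1
          rw [q, List.map_ofFn, List.prod_ofFn]
          rfl
        rw [Finset.sum_congr rfl (fun f _ => hterm f)]
        rw [← ENNReal.ofReal_sum_of_nonneg (fun f _ => Finset.prod_nonneg
          (fun i _ => (hg_pos (f i)).le))]
        have : (∑ f : Fin n → Fin p, ∏ i : Fin n, g (f i)) = 1 := by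
          have := Finset.prod_univ_sum (fun _ : Fin n => (Finset.univ : Finset (Fin p)))
            (fun _ j => g j)
          rw [Fintype.piFinset_univ] at this
          rw [← this, hg_sum]
          simp
        rw [this, ENNReal.ofReal_one]
      rw [Filter.liminf_congr hconst, Filter.liminf_const]
    have : dimH F ≤ (s.toNNReal : ℝ≥0∞) := by
      apply dimH_le_of_hausdorffMeasure_ne_top (d := s.toNNReal)
      rw [Real.coe_toNNReal s hs]
      exact ne_top_of_le_ne_top ENNReal.one_ne_top hmeas
    rwa [ENNReal.ofReal]
  -- lower bound
  have hlower : ENNReal.ofReal s ≤ dimH F := by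
    rcases eq_or_lt_of_le hs with hs0 | hs_pos
    · rw [← hs0, ENNReal.ofReal_zero]; exact zero_le
    -- the address map
    set T : ℝ → ℝ := fun t => ⨆ m : ℕ, A ((chain hp g t (m + 1)).1) with hT_def
    -- branch facts for t ∈ Ico 0 1
    have hAmem : ∀ (w : List (Fin p)), w ≠ [] → A w ∈ Δ w := by
      intro w hw
      rw [hΔ w hw]
      exact ⟨le_refl _, by linarith [hq_pos w]⟩
    have hnest' : ∀ (t : ℝ) {n m : ℕ}, 1 ≤ n → n ≤ m →
        Δ (chain hp g t m).1 ⊆ Δ (chain hp g t n).1 := fun t {n m} hn hm =>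
      chain_nest hp g t hNest hn hm
    have hbdd : ∀ t : ℝ, BddAbove (Set.range fun m : ℕ => A ((chain hp g t (m + 1)).1)) := by
      intro t
      refine ⟨A ((chain hp g t 1).1) + q lam ((chain hp g t 1).1), ?_⟩
      rintro y ⟨m, rfl⟩
      have h1 : A ((chain hp g t (m+1)).1) ∈ Δ ((chain hp g t 1).1) :=
        hnest' t le_rfl (by omega) (hAmem _ (chain_fst_ne_nil hp g t m))
      rw [hΔ _ (chain_fst_ne_nil hp g t 0)] at h1
      exact h1.2
    have hTmem : ∀ (t : ℝ) (n : ℕ), 1 ≤ n → T t ∈ Δ (chain hp g t n).1 := by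
      intro t n hn
      obtain ⟨n', rfl⟩ : ∃ n', n = n' + 1 := ⟨n - 1, by omega⟩
      rw [hΔ _ (chain_fst_ne_nil hp g t n')]
      constructor
      · exact le_ciSup (hbdd t) n'
      · apply ciSup_le
        intro m
        rcases le_total (m + 1) (n' + 1) with hmn | hmn
        · have h1 : A ((chain hp g t (n'+1)).1) ∈ Δ ((chain hp g t (m+1)).1) :=
            hnest' t (by omega) hmn (hAmem _ (chain_fst_ne_nil hp g t n'))
          rw [hΔ _ (chain_fst_ne_nil hp g t m)] at h1
          linarith [h1.1, hq_pos ((chain hp g t (n'+1)).1)]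
        · have h1 : A ((chain hp g t (m+1)).1) ∈ Δ ((chain hp g t (n'+1)).1) :=
            hnest' t (by omega) hmn (hAmem _ (chain_fst_ne_nil hp g t m))
          rw [hΔ _ (chain_fst_ne_nil hp g t n')] at h1
          exact h1.2
    -- measurability of T
    have hTmeas : Measurable T := by
      apply Measurable.iSup
      intro m
      intro V hV
      have : (fun t => A ((chain hp g t (m + 1)).1)) ⁻¹' V
          = ⋃ (w : List (Fin p)) (_ : A w ∈ V), {t : ℝ | (chain hp g t (m + 1)).1 = w} := by
        ext t
        simp only [Set.mem_preimage, Set.mem_iUnion, Set.mem_setOf_eq]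
        constructor
        · intro h
          exact ⟨(chain hp g t (m + 1)).1, h, rfl⟩
        · rintro ⟨w, hw, hw2⟩
          rw [hw2]
          exact hw
      rw [this]
      exact MeasurableSet.iUnion fun w => MeasurableSet.iUnion fun _ =>
        measurableSet_fiber hp g hg_pos (m + 1) w
    -- the measure
    set ν : Measure ℝ := Measure.map T (volume.restrict (Set.Ico (0:ℝ) 1)) with hν_def
    have hFclosed : IsClosed F := by
      rw [hF]
      apply isClosed_iInter
      intro n
      apply isClosed_iInter
      intro hn
      rw [hgen n]
      apply isClosed_iUnion_of_finite
      intro f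
      have hne : List.ofFn f ≠ [] := by
        intro h
        have := congrArg List.length h
        simp at this
        omega
      rw [hΔ _ hne]
      exact isClosed_Icc
    have hνF : ν F = 1 := by
      rw [hν_def, Measure.map_apply hTmeas hFclosed.measurableSet,
        Measure.restrict_apply (hTmeas hFclosed.measurableSet)]
      have hsub : Set.Ico (0:ℝ) 1 ⊆ T ⁻¹' F := by
        intro t ht
        rw [Set.mem_preimage, hF]
        refine Set.mem_iInter.mpr fun n => Set.mem_iInter.mpr fun hn => ?_
        exact Set.mem_iUnion₂.mpr ⟨(chain hp g t n).1, chain_length hp g t n, hTmem t n hn⟩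
      have : T ⁻¹' F ∩ Set.Ico (0:ℝ) 1 = Set.Ico (0:ℝ) 1 := by
        apply Set.Subset.antisymm Set.inter_subset_right
        exact fun t ht => ⟨hsub ht, ht⟩
      rw [this, Real.volume_Ico]
      simp
    -- key covering estimate
    have hkey : ∀ U : Set ℝ, IsClosed U → U.Nonempty → ∀ r : ℝ, 0 < r → r ≤ lm / 2 →
        (∀ y ∈ U, ∀ z ∈ U, |y - z| ≤ r) → ν U ≤ ENNReal.ofReal ((4 / lm) * r ^ s) := by
      intro U hUclosed hUne r hr hrlm hUdiam
      obtain ⟨x₀, hx₀⟩ := hUne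
      obtain ⟨N, hN⟩ := exists_pow_lt_of_lt_one hr hlM_lt1
      set Sset : Set (List (Fin p)) := {w | q lam w ≤ r ∧ r < q lam w.dropLast ∧ w ≠ [] ∧
        (Δ w ∩ U).Nonempty} with hSset_def
      have hfin : Sset.Finite := by
        apply Set.Finite.subset (List.finite_length_le (Fin p) (N + 1))
        intro w hw
        obtain ⟨h1, h2, h3, -⟩ := hw
        have h4 : q lam w.dropLast ≤ lM ^ w.dropLast.length :=
          q_le_pow lam (fun k => ⟨(hlam k).1.le, hle_lM k⟩) hlM_pos.le _
        have h5 : lM ^ N < lM ^ w.dropLast.length := by linarith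
        have h6 : w.dropLast.length < N :=
          (pow_lt_pow_iff_right_of_lt_one₀ hlM_pos hlM_lt1).mp h5
        simp only [Set.mem_setOf_eq, List.length_dropLast] at h6 ⊢
        omega
      set SF : Finset (List (Fin p)) := hfin.toFinset with hSF_def
      have hSF_mem : ∀ w ∈ SF, q lam w ≤ r ∧ r < q lam w.dropLast ∧ w ≠ [] ∧
          (Δ w ∩ U).Nonempty := by
        intro w hw
        rw [hSF_def, Set.Finite.mem_toFinset] at hw
        exact hw
      -- covering of the preimage by stopping fibers
      have hcover : T ⁻¹' U ∩ Set.Ico (0:ℝ) 1 ⊆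
          ⋃ w ∈ SF, ({t : ℝ | (chain hp g t w.length).1 = w} ∩ Set.Ico (0:ℝ) 1) := by
        rintro t ⟨htU, htI⟩
        have hex : ∃ n, q lam (chain hp g t n).1 ≤ r := by
          refine ⟨N, ?_⟩
          have := q_le_pow lam (fun k => ⟨(hlam k).1.le, hle_lM k⟩) hlM_pos.le (chain hp g t N).1
          rw [chain_length] at this
          linarith
        set n₀ := Nat.find hex with hn₀_def
        have hfind : q lam (chain hp g t n₀).1 ≤ r := Nat.find_spec hex
        have hn₀pos : 1 ≤ n₀ := by
          rcases Nat.eq_zero_or_pos n₀ with h0 | h0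
          · exfalso
            have h1 := hfind
            rw [h0] at h1
            have : (1:ℝ) ≤ r := by simpa [chain, q_nil] using h1
            linarith
          · exact h0
        obtain ⟨n₁, hn₁⟩ : ∃ n₁, n₀ = n₁ + 1 := ⟨n₀ - 1, by omega⟩
        have hmin : r < q lam (chain hp g t n₁).1 := by
          have := Nat.find_min hex (m := n₁) (by omega)
          push_neg at this
          exact this
        have hdrop : ((chain hp g t n₀).1).dropLast = (chain hp g t n₁).1 := by
          obtain ⟨k, hk⟩ := chain_succ_fst hp g t n₁
          rw [hn₁, hk, List.dropLast_concat]
        have hwS : (chain hp g t n₀).1 ∈ SF := by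
          rw [hSF_def, Set.Finite.mem_toFinset]
          refine ⟨hfind, by rw [hdrop]; exact hmin, chain_fst_ne_nil' hp g t hn₀pos, ?_⟩
          exact ⟨T t, hTmem t n₀ hn₀pos, htU⟩
        refine Set.mem_biUnion hwS ⟨?_, htI⟩
        rw [Set.mem_setOf_eq, chain_length]
      -- volume of each fiber piece
      have hfibvol : ∀ w ∈ SF,
          volume ({t : ℝ | (chain hp g t w.length).1 = w} ∩ Set.Ico (0:ℝ) 1)
            ≤ ENNReal.ofReal (q g w) := by
        intro w hw
        rcases Set.eq_empty_or_nonempty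
          ({t : ℝ | (chain hp g t w.length).1 = w} ∩ Set.Ico (0:ℝ) 1) with he | ⟨t₁, ht₁⟩
        · rw [he]; simp
        have hsub2 : {t : ℝ | (chain hp g t w.length).1 = w} ∩ Set.Ico (0:ℝ) 1 ⊆
            Set.Ico ((chain hp g t₁ w.length).2) ((chain hp g t₁ w.length).2 + q g w) := by
          rintro t ⟨ht, htI⟩
          have ht' : (chain hp g t w.length).1 = w := ht
          have ht₁' : (chain hp g t₁ w.length).1 = w := ht₁.1
          have hsnd : (chain hp g t w.length).2 = (chain hp g t₁ w.length).2 :=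
            chain_snd_eq hp g t t₁ w.length (by rw [ht', ht₁'])
          have hm := chain_mem hp g hg_pos hg_sum htI w.length
          rw [ht', hsnd] at hm
          exact hm
        calc volume ({t : ℝ | (chain hp g t w.length).1 = w} ∩ Set.Ico (0:ℝ) 1)
            ≤ volume (Set.Ico ((chain hp g t₁ w.length).2)
              ((chain hp g t₁ w.length).2 + q g w)) := measure_mono hsub2
          _ = ENNReal.ofReal (q g w) := by
              rw [Real.volume_Ico]
              congr 1
              ring
      -- pairwise disjointness of the selected intervals
      have hpair : ∀ w ∈ SF, ∀ w' ∈ SF, w ≠ w' → w.length ≤ w'.length →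
          Disjoint (Δ w) (Δ w') := by
        intro w hw w' hw' hne hlen
        obtain ⟨hq1, hq2, hne1, -⟩ := hSF_mem w hw
        obtain ⟨hq1', hq2', hne1', -⟩ := hSF_mem w' hw'
        rcases eq_or_lt_of_le hlen with heq | hlt
        · exact hDisj w w' hne1 heq hne
        · set u := w'.take w.length with hu_def
          have hu_app : u ++ w'.drop w.length = w' := List.take_append_drop _ _
          have hu_len : u.length = w.length := by
            rw [hu_def, List.length_take]
            omega
          have hu_ne : u ≠ [] := by
            intro h
            rw [h] at hu_len
            simp only [List.length_nil] at hu_len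
            exact hne1 (List.eq_nil_of_length_eq_zero hu_len.symm)
          have hsubΔ : Δ w' ⊆ Δ u := by
            conv_lhs => rw [← hu_app]
            exact prefix_nest hNest u hu_ne _
          by_cases huw : u = w
          · exfalso
            set v := w'.drop w.length with hv_def
            have hv_ne : v ≠ [] := by
              intro h
              have := congrArg List.length hu_app
              rw [h] at this
              simp only [List.append_nil] at this
              rw [this] at hu_len
              omega
            have hdl : w'.dropLast = w ++ v.dropLast := by
              conv_lhs => rw [← hu_app, huw]
              exact List.dropLast_append_of_ne_nil hv_ne
            have hqq : q lam w'.dropLast = q lam w * q lam v.dropLast := by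
              rw [hdl, q_append]
            nlinarith [hq_le_one v.dropLast, hq_nonneg v.dropLast, hq_pos w]
          · have hdisj := hDisj w u hne1 hu_len.symm (fun h => huw h.symm)
            exact hdisj.mono_right hsubΔ
      -- each interval lies in a window around x₀
      have hwindow : ∀ w ∈ SF, Δ w ⊆ Set.Icc (x₀ - 2*r) (x₀ + 2*r) := by
        intro w hw y hy
        obtain ⟨hq1, -, hne1, ⟨z, hzΔ, hzU⟩⟩ := hSF_mem w hw
        rw [hΔ w hne1] at hy hzΔ
        have h2 := abs_le.mp (hUdiam z hzU x₀ hx₀)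
        constructor
        · nlinarith [hy.1, hy.2, hzΔ.1, hzΔ.2, h2.1, h2.2]
        · nlinarith [hy.1, hy.2, hzΔ.1, hzΔ.2, h2.1, h2.2]
      -- sum of lengths bounded by window length
      have hsumlen : ∑ w ∈ SF, q lam w ≤ 4 * r := by
        have hdisjSF : (SF : Set (List (Fin p))).PairwiseDisjoint Δ := by
          intro w hw w' hw' hne
          rw [Finset.mem_coe] at hw hw'
          rcases le_total w.length w'.length with h | h
          · exact hpair w hw w' hw' hne h
          · exact (hpair w' hw' w hw hne.symm h).symm
        have hmeasΔ : ∀ w ∈ SF, MeasurableSet (Δ w) := by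
          intro w hw
          rw [hΔ w (hSF_mem w hw).2.2.1]
          exact measurableSet_Icc
        have hvol : ∑ w ∈ SF, volume (Δ w) = volume (⋃ w ∈ SF, Δ w) :=
          (measure_biUnion_finset hdisjSF hmeasΔ).symm
        have hvol2 : volume (⋃ w ∈ SF, Δ w) ≤ ENNReal.ofReal (4 * r) := by
          refine le_trans (measure_mono (Set.iUnion₂_subset hwindow)) ?_
          rw [Real.volume_Icc]
          apply ENNReal.ofReal_le_ofReal
          ring_nf
          linarith
        have hvolw : ∀ w ∈ SF, volume (Δ w) = ENNReal.ofReal (q lam w) := by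
          intro w hw
          rw [hΔ w (hSF_mem w hw).2.2.1, Real.volume_Icc]
          congr 1
          ring
        rw [Finset.sum_congr rfl hvolw,
          ← ENNReal.ofReal_sum_of_nonneg (fun w _ => hq_nonneg w)] at hvol
        have h3 : ENNReal.ofReal (∑ w ∈ SF, q lam w) ≤ ENNReal.ofReal (4 * r) :=
          hvol ▸ hvol2
        exact (ENNReal.ofReal_le_ofReal_iff (by positivity)).mp h3
      -- cardinality bound
      have hcard : (SF.card : ℝ) * (lm * r) ≤ 4 * r := by
        refine le_trans ?_ hsumlen
        rw [← nsmul_eq_mul]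
        apply Finset.card_nsmul_le_sum
        intro w hw
        obtain ⟨hq1, hq2, hne1, -⟩ := hSF_mem w hw
        have hw' := List.dropLast_append_getLast hne1
        have hqsplit : q lam w = q lam w.dropLast * lam (w.getLast hne1) := by
          conv_lhs => rw [← hw']
          rw [q_append]
          simp [q]
        rw [hqsplit]
        have h5 := hlm_le (w.getLast hne1)
        nlinarith [hq_pos w.dropLast, hlm_pos]
      have hcard2 : (SF.card : ℝ) ≤ 4 / lm := by
        rw [le_div_iff₀ hlm_pos]
        nlinarith
      -- conclude
      have hfinal : ∑ w ∈ SF, q g w ≤ (4 / lm) * r ^ s := by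
        calc ∑ w ∈ SF, q g w ≤ SF.card • (r ^ s) := by
              apply Finset.sum_le_card_nsmul
              intro w hw
              rw [hqg]
              exact Real.rpow_le_rpow (hq_nonneg w) (hSF_mem w hw).1 hs
          _ = (SF.card : ℝ) * r ^ s := nsmul_eq_mul _ _
          _ ≤ (4 / lm) * r ^ s :=
              mul_le_mul_of_nonneg_right hcard2 (Real.rpow_nonneg hr.le s)
      calc ν U = volume (T ⁻¹' U ∩ Set.Ico (0:ℝ) 1) := by
            rw [hν_def, Measure.map_apply hTmeas hUclosed.measurableSet,
              Measure.restrict_apply (hTmeas hUclosed.measurableSet)]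
        _ ≤ volume (⋃ w ∈ SF, ({t : ℝ | (chain hp g t w.length).1 = w} ∩ Set.Ico (0:ℝ) 1)) :=
            measure_mono hcover
        _ ≤ ∑ w ∈ SF, volume ({t : ℝ | (chain hp g t w.length).1 = w} ∩ Set.Ico (0:ℝ) 1) :=
            measure_biUnion_finset_le _ _
        _ ≤ ∑ w ∈ SF, ENNReal.ofReal (q g w) := Finset.sum_le_sum hfibvol
        _ = ENNReal.ofReal (∑ w ∈ SF, q g w) :=
            (ENNReal.ofReal_sum_of_nonneg (fun w _ => (q_pos g hg_pos w).le)).symm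
        _ ≤ ENNReal.ofReal ((4 / lm) * r ^ s) := ENNReal.ofReal_le_ofReal hfinal
    -- Frostman-type bound
    set μ : Measure ℝ := (ENNReal.ofReal (lm / 4)) • ν with hμ_def
    have hεpos : (0:ℝ≥0∞) < ENNReal.ofReal (lm / 2) := ENNReal.ofReal_pos.mpr (by linarith)
    have hrany : ∀ (V : Set ℝ), V.Nonempty → ∀ r : ℝ, 0 < r → r ≤ lm / 2 →
        Metric.ediam V ≤ ENNReal.ofReal r → ν V ≤ ENNReal.ofReal ((4 / lm) * r ^ s) := by
      intro V hVne r hr hrlm hVdiam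
      have hclos : ν V ≤ ν (closure V) := measure_mono subset_closure
      refine hclos.trans (hkey (closure V) isClosed_closure hVne.closure r hr hrlm ?_)
      intro y hy z hz
      have h1 : edist y z ≤ Metric.ediam (closure V) := EMetric.edist_le_diam_of_mem hy hz
      rw [Metric.ediam_closure] at h1
      have h2 : edist y z ≤ ENNReal.ofReal r := h1.trans hVdiam
      rw [edist_dist] at h2
      have h3 : dist y z ≤ r := (ENNReal.ofReal_le_ofReal_iff hr.le).mp h2
      rwa [Real.dist_eq] at h3
    have hfrost : ∀ V : Set ℝ, Metric.ediam V ≤ ENNReal.ofReal (lm / 2) →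
        μ V ≤ Metric.ediam V ^ s := by
      intro V hV
      rcases Set.eq_empty_or_nonempty V with rfl | hVne
      · simp [hμ_def]
      rcases eq_or_ne (Metric.ediam V) 0 with hd0 | hdne
      · have hν0 : ν V = 0 := by
          have hle : ∀ k : ℕ, ν V ≤ ENNReal.ofReal ((4 / lm) * (lm / 2 / (k + 1)) ^ s) := by
            intro k
            apply hrany V hVne
            · positivity
            · apply div_le_self (by linarith)
              have : (0:ℝ) ≤ (k:ℝ) := Nat.cast_nonneg k
              linarith
            · rw [hd0]; exact zero_le
          have htend : Filter.Tendsto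
              (fun k : ℕ => ENNReal.ofReal ((4 / lm) * (lm / 2 / (k + 1)) ^ s))
              Filter.atTop (nhds 0) := by
            have h1 : Filter.Tendsto (fun k : ℕ => lm / 2 / ((k:ℝ) + 1)) Filter.atTop (nhds 0) := by
              have h0 := tendsto_const_div_atTop_nhds_zero_nat (lm / 2)
              have h2 := h0.comp (Filter.tendsto_add_atTop_nat 1)
              have heq : ((fun n : ℕ => lm / 2 / (n:ℝ)) ∘ fun a => a + 1)
                  = fun k : ℕ => lm / 2 / ((k:ℝ) + 1) := by
                funext k
                simp [Function.comp]
              rwa [heq] at h2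
            have hc : ContinuousAt (fun x : ℝ => x ^ s) 0 :=
              Real.continuousAt_rpow_const 0 s (Or.inr hs_pos.le)
            have h2 := hc.tendsto.comp h1
            rw [Real.zero_rpow hs_pos.ne'] at h2
            have h3 := h2.const_mul (4 / lm)
            rw [mul_zero] at h3
            have h4 := (ENNReal.continuous_ofReal.tendsto 0).comp h3
            rw [ENNReal.ofReal_zero] at h4
            exact h4
          have : ν V ≤ 0 := ge_of_tendsto htend (Filter.Eventually.of_forall hle)
          exact le_antisymm this (zero_le)
        rw [hμ_def, Measure.smul_apply, smul_eq_mul, hν0, mul_zero]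
        exact zero_le
      · set r := (Metric.ediam V).toReal with hr_def
        have hdtop : Metric.ediam V ≠ ⊤ := ne_top_of_le_ne_top ENNReal.ofReal_ne_top hV
        have hrpos : 0 < r := ENNReal.toReal_pos hdne hdtop
        have hofr : ENNReal.ofReal r = Metric.ediam V := ENNReal.ofReal_toReal hdtop
        have hrle : r ≤ lm / 2 := by
          have := ENNReal.toReal_mono ENNReal.ofReal_ne_top hV
          rwa [ENNReal.toReal_ofReal (by linarith)] at this
        have h1 := hrany V hVne r hrpos hrle (le_of_eq hofr.symm)
        rw [hμ_def, Measure.smul_apply, smul_eq_mul]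
        calc ENNReal.ofReal (lm / 4) * ν V
            ≤ ENNReal.ofReal (lm / 4) * ENNReal.ofReal ((4 / lm) * r ^ s) :=
              mul_le_mul_right h1 _
          _ = ENNReal.ofReal ((lm / 4) * ((4 / lm) * r ^ s)) :=
              (ENNReal.ofReal_mul (by linarith)).symm
          _ = ENNReal.ofReal (r ^ s) := by
              congr 1
              rw [show (lm / 4) * ((4 / lm) * r ^ s) = (lm / lm) * r ^ s by ring,
                div_self hlm_pos.ne', one_mul]
          _ = (ENNReal.ofReal r) ^ s := (ENNReal.ofReal_rpow_of_pos hrpos).symm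
          _ = Metric.ediam V ^ s := by rw [hofr]
    have hμle : μ ≤ μH[s] :=
      MeasureTheory.Measure.le_hausdorffMeasure s μ _ hεpos hfrost
    have hHF : μH[s] F ≠ 0 := by
      have hle := MeasureTheory.Measure.le_iff'.mp hμle F
      rw [hμ_def, Measure.smul_apply, smul_eq_mul, hνF, mul_one] at hle
      intro h0
      rw [h0, le_zero_iff] at hle
      have hpos : (0:ℝ≥0∞) < ENNReal.ofReal (lm / 4) := ENNReal.ofReal_pos.mpr (by linarith)
      rw [hle] at hpos
      exact lt_irrefl _ hpos
    have hfin := le_dimH_of_hausdorffMeasure_ne_zero (d := s.toNNReal)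
      (by rwa [Real.coe_toNNReal s hs])
    rwa [ENNReal.ofReal]
  exact le_antisymm hupper hlower
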